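/- Let a ≥ 1 and b ≥ 2 be integers. For Lebesgue-almost every x ∈ D: (T_{a,b}^k(x))_i → 0 as k → ∞ for every 1 ≤ i ≤ a+1, and for every j with a+2 ≤ j ≤ a+b the limit lim_{k→∞} (T_{a,b}^k(x))_j equals x_j − (x_1+…+x_{a+1}) and is strictly positive. -/

import Mathlib

open MeasureTheory Filter Topology

/-- `Λⁿ`: points of `ℝⁿ` with nonnegative, nondecreasing coordinates. -/
def Lambda (n : ℕ) : Set (Fin n → ℝ) := {x | (∀ i, 0 ≤ x i) ∧ Monotone x}

/-- The vector `(x₁,…,x_a, x_{a+1}-x_a,…,x_{a+b}-x_a)` (0-based indexing). -/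
noncomputable def subVec (a b : ℕ) (x : Fin (a + b) → ℝ) : Fin (a + b) → ℝ :=
  fun j => if (j : ℕ) < a then x j else x j - x ⟨a - 1, by have := j.isLt; omega⟩

/-- The map `T_{a,b}`: nondecreasing rearrangement of `subVec a b x`. -/
noncomputable def Tab (a b : ℕ) (x : Fin (a + b) → ℝ) : Fin (a + b) → ℝ :=
  subVec a b x ∘ Tuple.sort (subVec a b x)

namespace Stmt14

/-- Uniqueness of the monotone rearrangement. -/
lemma tab_eq_of_monotone {n : ℕ} {v w : Fin n → ℝ} (σ : Equiv.Perm (Fin n))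
    (hw : Monotone w) (h : v ∘ σ = w) : v ∘ Tuple.sort v = w := by
  rw [← h] at hw ⊢
  exact ((Tuple.comp_sort_eq_comp_iff_monotone).2 hw).symm

variable {a b : ℕ}

private def extFun (h : a + 1 ≤ a + b) (τ : Equiv.Perm (Fin (a + 1)))
    (j : Fin (a + b)) : Fin (a + b) :=
  if hj : (j : ℕ) < a + 1 then Fin.castLE h (τ ⟨j, hj⟩) else j

private lemma extFun_extFun (h : a + 1 ≤ a + b) (τ τ' : Equiv.Perm (Fin (a + 1)))
    (hττ' : ∀ i, τ' (τ i) = i) (j : Fin (a + b)) :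
    extFun h τ' (extFun h τ j) = j := by
  unfold extFun
  by_cases hj : (j : ℕ) < a + 1
  · rw [dif_pos hj]
    have h1 : ((Fin.castLE h (τ ⟨j, hj⟩)) : ℕ) < a + 1 := (τ ⟨j, hj⟩).isLt
    rw [dif_pos h1]
    have h2 : (⟨((Fin.castLE h (τ ⟨j, hj⟩)) : ℕ), h1⟩ : Fin (a + 1)) = τ ⟨j, hj⟩ := rfl
    rw [h2, hττ']
    rfl
  · rw [dif_neg hj, dif_neg hj]

/-- Extend a permutation of the first `a+1` coordinates by the identity. -/
private def extPerm (h : a + 1 ≤ a + b) (τ : Equiv.Perm (Fin (a + 1))) :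
    Equiv.Perm (Fin (a + b)) :=
  ⟨extFun h τ, extFun h τ.symm,
    fun j => extFun_extFun h τ τ.symm (fun i => τ.symm_apply_apply i) j,
    fun j => extFun_extFun h τ.symm τ (fun i => τ.apply_symm_apply i) j⟩

/-- the sum of the first `a+1` coordinates. -/
noncomputable def Sv (hab : a + 1 ≤ a + b) (x : Fin (a + b) → ℝ) : ℝ :=
  ∑ i : Fin (a + 1), x (Fin.castLE hab i)

lemma subVec_small (x : Fin (a + b) → ℝ) (j : Fin (a + b)) (hj : (j : ℕ) < a) :
    subVec a b x j = x j := if_pos hj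

lemma subVec_big (x : Fin (a + b) → ℝ) (j : Fin (a + b)) (hj : a ≤ (j : ℕ)) :
    subVec a b x j = x j - x ⟨a - 1, by have := j.isLt; omega⟩ :=
  if_neg (by omega)

lemma Sv_split (hab : a + 1 ≤ a + b) (x : Fin (a + b) → ℝ) :
    Sv hab x = (∑ i : Fin a, x (Fin.castLE hab i.castSucc)) + x ⟨a, by omega⟩ := by
  rw [Sv, Fin.sum_univ_castSucc]
  rfl

lemma Sv_nonneg (hab : a + 1 ≤ a + b) {x : Fin (a + b) → ℝ} (hx : x ∈ Lambda (a + b)) :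
    0 ≤ Sv hab x :=
  Finset.sum_nonneg fun i _ => hx.1 _

lemma coord_le_Sv (hab : a + 1 ≤ a + b) {x : Fin (a + b) → ℝ} (hx : x ∈ Lambda (a + b))
    (i : Fin (a + 1)) : x (Fin.castLE hab i) ≤ Sv hab x :=
  Finset.single_le_sum (fun i _ => hx.1 _) (Finset.mem_univ i)

lemma lambda_mono {x : Fin (a + b) → ℝ} (hx : x ∈ Lambda (a + b))
    (i j : Fin (a + b)) (hij : (i : ℕ) ≤ (j : ℕ)) : x i ≤ x j :=
  hx.2 hij

/-- Main one-step lemma: description of `Tab` on the invariant set. -/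
lemma tab_spec (ha : 1 ≤ a) (hab : a + 1 ≤ a + b) (hab2 : a + 2 ≤ a + b) (x : Fin (a + b) → ℝ)
    (hx : x ∈ Lambda (a + b))
    (hD : Sv hab x ≤ x ⟨a + 1, by omega⟩) :
    Tab a b x ∈ Lambda (a + b) ∧
    Sv hab (Tab a b x) = Sv hab x - x ⟨a - 1, by omega⟩ ∧
    (∀ j : Fin (a + b), a + 1 ≤ (j : ℕ) →
      Tab a b x j = x j - x ⟨a - 1, by omega⟩) := by
  set c : ℝ := x ⟨a - 1, by omega⟩ with hc
  set v : Fin (a + b) → ℝ := subVec a b x with hv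
  set y : Fin (a + 1) → ℝ := fun i => v (Fin.castLE hab i) with hy
  set τ : Equiv.Perm (Fin (a + 1)) := Tuple.sort y with hτ
  have hyS : ∀ i : Fin (a + 1), (i : ℕ) < a → y i = x (Fin.castLE hab i) := by
    intro i hi
    exact subVec_small x _ hi
  have hyB : ∀ i : Fin (a + 1), a ≤ (i : ℕ) → y i = x ⟨a, by omega⟩ - c := by
    intro i hi
    have hia : (Fin.castLE hab i : Fin (a + b)) = ⟨a, by omega⟩ := by
      apply Fin.ext
      show (i : ℕ) = a
      omega
    have h5 : y i = v (Fin.castLE hab i) := rfl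
    rw [h5, hia]
    exact subVec_big x _ (le_refl a)
  have hy0 : ∀ i : Fin (a + 1), 0 ≤ y i := by
    intro i
    by_cases hi : (i : ℕ) < a
    · rw [hyS i hi]; exact hx.1 _
    · rw [hyB i (by omega)]
      have : c ≤ x ⟨a, by omega⟩ :=
        lambda_mono hx ⟨a - 1, by omega⟩ ⟨a, by omega⟩ (show a - 1 ≤ a from Nat.sub_le a 1)
      linarith
  have hsumy : ∑ i, y i = Sv hab x - c := by
    rw [Fin.sum_univ_castSucc, Sv_split hab x]
    have h1 : ∀ i : Fin a, y i.castSucc = x (Fin.castLE hab i.castSucc) := by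
      intro i
      exact hyS _ (by simpa using i.isLt)
    have h2 : y (Fin.last a) = x ⟨a, by omega⟩ - c := hyB _ (by simp [Fin.last])
    rw [Finset.sum_congr rfl (fun i _ => h1 i), h2]
    ring
  have hyle : ∀ i : Fin (a + 1), y i ≤ Sv hab x - c := by
    intro i
    rw [← hsumy]
    exact Finset.single_le_sum (fun i _ => hy0 i) (Finset.mem_univ i)
  have hvB : ∀ j : Fin (a + b), a + 1 ≤ (j : ℕ) → v j = x j - c := by
    intro j hj
    exact subVec_big x j (by omega)
  have hxj : ∀ j : Fin (a + b), a + 1 ≤ (j : ℕ) → x ⟨a + 1, by omega⟩ ≤ x j := by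
    intro j hj
    exact lambda_mono hx _ _ (by simpa using hj)
  -- the candidate sorted vector
  set w : Fin (a + b) → ℝ :=
    fun j => if hj : (j : ℕ) < a + 1 then y (τ ⟨j, hj⟩) else v j with hw
  have hwS : ∀ (j : Fin (a + b)) (hj : (j : ℕ) < a + 1), w j = y (τ ⟨j, hj⟩) := by
    intro j hj
    simp only [hw, dif_pos hj]
  have hwB : ∀ j : Fin (a + b), a + 1 ≤ (j : ℕ) → w j = x j - c := by
    intro j hj
    have : ¬ ((j : ℕ) < a + 1) := by omega
    simp only [hw, dif_neg this]
    exact hvB j hj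
  have hyτ_mono : Monotone (y ∘ τ) := Tuple.monotone_sort y
  have hwmono : Monotone w := by
    intro j1 j2 hle
    have hle' : (j1 : ℕ) ≤ (j2 : ℕ) := hle
    by_cases h1 : (j1 : ℕ) < a + 1
    · by_cases h2 : (j2 : ℕ) < a + 1
      · rw [hwS j1 h1, hwS j2 h2]
        exact hyτ_mono (show (⟨(j1 : ℕ), h1⟩ : Fin (a + 1)) ≤ ⟨(j2 : ℕ), h2⟩ from hle')
      · rw [hwS j1 h1, hwB j2 (by omega)]
        have e1 : y (τ ⟨(j1 : ℕ), h1⟩) ≤ Sv hab x - c := hyle _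
        have e2 : x ⟨a + 1, by omega⟩ ≤ x j2 := hxj j2 (by omega)
        linarith
    · have h2 : ¬ (j2 : ℕ) < a + 1 := by omega
      rw [hwB j1 (by omega), hwB j2 (by omega)]
      have := lambda_mono hx j1 j2 hle'
      linarith
  have hcomp : v ∘ (extPerm hab τ) = w := by
    funext j
    show v (extFun hab τ j) = w j
    by_cases hj : (j : ℕ) < a + 1
    · rw [extFun, dif_pos hj, hwS j hj]
    · rw [extFun, dif_neg hj]
      simp only [hw, dif_neg hj]
  have hTab : Tab a b x = w := tab_eq_of_monotone (extPerm hab τ) hwmono hcomp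
  have hwpos : ∀ j, 0 ≤ w j := by
    intro j
    by_cases hj : (j : ℕ) < a + 1
    · rw [hwS j hj]; exact hy0 _
    · rw [hwB j (by omega)]
      have := hxj j (by omega)
      have hcS : c ≤ Sv hab x := by
        have h9 := coord_le_Sv hab hx (⟨a - 1, by omega⟩ : Fin (a + 1))
        have h8 : (Fin.castLE hab (⟨a - 1, by omega⟩ : Fin (a + 1)) : Fin (a + b))
            = ⟨a - 1, by omega⟩ := rfl
        rw [h8] at h9
        exact h9
      linarith
  have hsum : Sv hab (Tab a b x) = Sv hab x - c := by
    rw [hTab, Sv]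
    have h7 : ∀ i : Fin (a + 1), w (Fin.castLE hab i) = y (τ i) := by
      intro i
      rw [hwS (Fin.castLE hab i) (by simpa using i.isLt)]
      rfl
    rw [Finset.sum_congr rfl (fun i _ => h7 i)]
    rw [Equiv.sum_comp τ y]
    exact hsumy
  refine ⟨⟨fun j => by rw [hTab]; exact hwpos j, by rw [hTab]; exact hwmono⟩, hsum, ?_⟩
  intro j hj
  rw [hTab, hwB j hj]

/-- If moreover `2 x_{a-1} ≤ x_a`, the subtracted vector is already sorted. -/
lemma tab_frozen (ha : 1 ≤ a) (hab : a + 1 ≤ a + b) (x : Fin (a + b) → ℝ)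
    (hx : x ∈ Lambda (a + b))
    (h2 : 2 * x ⟨a - 1, by omega⟩ ≤ x ⟨a, by omega⟩) :
    Tab a b x = subVec a b x := by
  have hmono : Monotone (subVec a b x) := by
    intro j1 j2 hle
    have hle' : (j1 : ℕ) ≤ (j2 : ℕ) := hle
    by_cases h1 : (j1 : ℕ) < a
    · by_cases hj2 : (j2 : ℕ) < a
      · rw [subVec_small x _ h1, subVec_small x _ hj2]
        exact lambda_mono hx _ _ hle'
      · rw [subVec_small x _ h1, subVec_big x _ (by omega)]
        have e1 : x j1 ≤ x ⟨a - 1, by omega⟩ :=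
          lambda_mono hx j1 ⟨a - 1, by omega⟩ (show (j1 : ℕ) ≤ a - 1 by omega)
        have e2 : x ⟨a, by omega⟩ ≤ x j2 :=
          lambda_mono hx ⟨a, by omega⟩ j2 (show a ≤ (j2 : ℕ) by omega)
        linarith
    · have hj2 : ¬ (j2 : ℕ) < a := by omega
      rw [subVec_big x _ (by omega), subVec_big x _ (by omega)]
      have := lambda_mono hx j1 j2 hle'
      linarith
  show subVec a b x ∘ Tuple.sort (subVec a b x) = subVec a b x
  rw [Tuple.sort_eq_refl_iff_monotone.2 hmono]
  rfl

/-- Iteration of the one-step lemma. -/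
lemma iter_spec (ha : 1 ≤ a) (hab : a + 1 ≤ a + b) (hab2 : a + 2 ≤ a + b) (x : Fin (a + b) → ℝ)
    (hx : x ∈ Lambda (a + b))
    (hD : Sv hab x ≤ x ⟨a + 1, by omega⟩) (k : ℕ) :
    (Tab a b)^[k] x ∈ Lambda (a + b) ∧
    Sv hab ((Tab a b)^[k] x) ≤ ((Tab a b)^[k] x) ⟨a + 1, by omega⟩ ∧
    (∀ j : Fin (a + b), a + 1 ≤ (j : ℕ) →
      ((Tab a b)^[k] x) j = x j - Sv hab x + Sv hab ((Tab a b)^[k] x)) := by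
  induction k with
  | zero =>
    refine ⟨hx, hD, fun j hj => by simp⟩
  | succ k ih =>
    obtain ⟨h1, h2, h3⟩ := ih
    obtain ⟨g1, g2, g3⟩ := tab_spec ha hab hab2 ((Tab a b)^[k] x) h1 h2
    rw [Function.iterate_succ_apply']
    refine ⟨g1, ?_, ?_⟩
    · rw [g2, g3 _ (by simp)]
      have : 0 ≤ ((Tab a b)^[k] x) ⟨a - 1, by omega⟩ := h1.1 _
      linarith
    · intro j hj
      rw [g3 j hj, g2, h3 j hj]
      ring

/-- Precomposition with a permutation, as a linear equivalence. -/
noncomputable def permLinear {n : ℕ} (σ : Equiv.Perm (Fin n)) :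
    (Fin n → ℝ) ≃ₗ[ℝ] (Fin n → ℝ) where
  toFun y := y ∘ σ
  invFun y := y ∘ σ.symm
  left_inv y := by funext i; simp
  right_inv y := by funext i; simp
  map_add' _ _ := rfl
  map_smul' _ _ := rfl

/-- `subVec` as a linear equivalence. -/
noncomputable def subVecEquiv (ha : 1 ≤ a) (hb : 1 ≤ b) :
    (Fin (a + b) → ℝ) ≃ₗ[ℝ] (Fin (a + b) → ℝ) where
  toFun := subVec a b
  invFun := fun y j =>
    if (j : ℕ) < a then y j else y j + y ⟨a - 1, by have := j.isLt; omega⟩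
  map_add' x y := by
    funext j
    by_cases hj : (j : ℕ) < a
    · simp [subVec, hj]
    · simp [subVec, hj]
      ring
  map_smul' m x := by
    funext j
    by_cases hj : (j : ℕ) < a
    · simp [subVec, hj]
    · simp [subVec, hj]
      ring
  left_inv x := by
    funext j
    by_cases hj : (j : ℕ) < a
    · simp only [if_pos hj]
      exact subVec_small x j hj
    · simp only [if_neg hj]
      rw [subVec_big x j (by omega), subVec_small x ⟨a - 1, by omega⟩ (by
        show a - 1 < a
        omega)]
      ring
  right_inv y := by
    funext j
    show subVec a b (fun j => if (j : ℕ) < a then y j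
      else y j + y ⟨a - 1, by have := j.isLt; omega⟩) j = y j
    by_cases hj : (j : ℕ) < a
    · rw [subVec_small _ j hj]
      simp only [if_pos hj]
    · rw [subVec_big _ j (by omega)]
      simp only [if_neg hj]
      have h2 : (a - 1 : ℕ) < a := by omega
      simp only [if_pos h2]
      ring

lemma tab_preimage_null (ha : 1 ≤ a) (hb : 1 ≤ b) {N : Set (Fin (a + b) → ℝ)}
    (hN : volume N = 0) : volume (Tab a b ⁻¹' N) = 0 := by
  have hsub : Tab a b ⁻¹' N ⊆
      ⋃ σ : Equiv.Perm (Fin (a + b)),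
        ⇑((subVecEquiv ha hb).trans (permLinear σ)) ⁻¹' N := by
    intro x hx
    refine Set.mem_iUnion.2 ⟨Tuple.sort (subVec a b x), ?_⟩
    exact hx
  refine measure_mono_null hsub (measure_iUnion_null fun σ => ?_)
  have e := (subVecEquiv (b := b) ha hb).trans (permLinear σ)
  set e := (subVecEquiv (b := b) ha hb).trans (permLinear σ) with he
  have h1 : ⇑e ⁻¹' N = ⇑e.toEquiv.symm '' N := by
    rw [Equiv.image_eq_preimage_symm, Equiv.symm_symm]
    rfl
  rw [h1]
  have h2 : ⇑e.toEquiv.symm '' N = ⇑(e.symm.toLinearMap) '' N := rfl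
  rw [h2, Measure.addHaar_image_linearMap, hN, mul_zero]

lemma coord_hyperplane_null {n : ℕ} (i : Fin n) :
    volume {x : Fin n → ℝ | x i = 0} = 0 := by
  have h : {x : Fin n → ℝ | x i = 0} =
      (LinearMap.ker (LinearMap.proj (R := ℝ) (φ := fun _ : Fin n => ℝ) i) :
        Set (Fin n → ℝ)) := by
    ext x
    simp [LinearMap.mem_ker]
  rw [h]
  refine Measure.addHaar_submodule volume _ (fun htop => ?_)
  rw [LinearMap.ker_eq_top] at htop
  have h2 : (LinearMap.proj (R := ℝ) (φ := fun _ : Fin n => ℝ) i) (fun _ => (1 : ℝ)) = 1 :=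
    rfl
  rw [htop] at h2
  simp at h2

lemma hyper2_null (hab : a + 1 ≤ a + b) (hab2 : a + 2 ≤ a + b) :
    volume {x : Fin (a + b) → ℝ | x ⟨a + 1, by omega⟩ - Sv hab x = 0} = 0 := by
  set ℓ : (Fin (a + b) → ℝ) →ₗ[ℝ] ℝ :=
    LinearMap.proj ⟨a + 1, by omega⟩ -
      ∑ i : Fin (a + 1), LinearMap.proj (Fin.castLE hab i) with hℓ
  have happ : ∀ x, ℓ x = x ⟨a + 1, by omega⟩ - Sv hab x := by
    intro x
    simp [hℓ, Sv, LinearMap.sub_apply, LinearMap.sum_apply, LinearMap.proj_apply]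
  have h : {x : Fin (a + b) → ℝ | x ⟨a + 1, by omega⟩ - Sv hab x = 0} =
      (LinearMap.ker ℓ : Set (Fin (a + b) → ℝ)) := by
    ext x
    simp [LinearMap.mem_ker, happ]
  rw [h]
  refine Measure.addHaar_submodule volume _ (fun htop => ?_)
  rw [LinearMap.ker_eq_top] at htop
  have h2 : ℓ (fun j => if (j : ℕ) = a + 1 then 1 else 0) = 1 := by
    rw [happ]
    have e1 : (fun j : Fin (a + b) => if (j : ℕ) = a + 1 then (1 : ℝ) else 0)
        ⟨a + 1, by omega⟩ = 1 := if_pos rfl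
    have e2 : Sv hab (fun j => if (j : ℕ) = a + 1 then (1 : ℝ) else 0) = 0 :=
      Finset.sum_eq_zero fun i _ =>
        if_neg (show ¬ ((i : ℕ) = a + 1) by have := i.isLt; omega)
    rw [e2]
    norm_num
  rw [htop] at h2
  simp at h2

end Stmt14

open Stmt14 in
/-- for `a ≥ 1`, `b ≥ 2`, for a.e. `x` in
`D = {x ∈ Λ^{a+b} : x₁+…+x_{a+1} ≤ x_{a+2}}`, the first `a+1` coordinates of
the iterates tend to `0`, and for `a+2 ≤ j ≤ a+b` the `j`-th coordinate tends
to `x_j − (x₁+…+x_{a+1}) > 0`. -/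
theorem statement14 (a b : ℕ) (ha : 1 ≤ a) (hb : 2 ≤ b) :
    ∀ᵐ x : Fin (a + b) → ℝ,
      (x ∈ Lambda (a + b) ∧
        ∑ i : Fin (a + 1), x ⟨i, by have := i.isLt; omega⟩ ≤ x ⟨a + 1, by omega⟩) →
      (∀ i : Fin (a + b), (i : ℕ) < a + 1 →
        Tendsto (fun k => (Tab a b)^[k] x i) atTop (𝓝 0)) ∧
      (∀ j : Fin (a + b), a + 1 ≤ (j : ℕ) →
        0 < x j - ∑ i : Fin (a + 1), x ⟨i, by have := i.isLt; omega⟩ ∧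
        Tendsto (fun k => (Tab a b)^[k] x j) atTop
          (𝓝 (x j - ∑ i : Fin (a + 1), x ⟨i, by have := i.isLt; omega⟩))) := by
  have hab : a + 1 ≤ a + b := by omega
  have hab2 : a + 2 ≤ a + b := by omega
  have hb1 : 1 ≤ b := by omega
  -- the bad null set
  have hiter : ∀ k : ℕ, volume ((fun x : Fin (a + b) → ℝ => (Tab a b)^[k] x) ⁻¹'
      {z : Fin (a + b) → ℝ | z ⟨a - 1, by omega⟩ = 0}) = 0 := by
    intro k
    induction k with
    | zero =>
      simpa using coord_hyperplane_null (⟨a - 1, by omega⟩ : Fin (a + b))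
    | succ k ih =>
      have hset : (fun x : Fin (a + b) → ℝ => (Tab a b)^[k + 1] x) ⁻¹'
          {z : Fin (a + b) → ℝ | z ⟨a - 1, by omega⟩ = 0} =
          Tab a b ⁻¹' ((fun x : Fin (a + b) → ℝ => (Tab a b)^[k] x) ⁻¹'
            {z : Fin (a + b) → ℝ | z ⟨a - 1, by omega⟩ = 0}) := by
        ext x
        simp only [Set.mem_preimage, Function.iterate_succ_apply]
      rw [hset]
      exact tab_preimage_null ha hb1 ih
  have hBADnull : volume ({x : Fin (a + b) → ℝ | x ⟨a + 1, by omega⟩ - Sv hab x = 0} ∪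
      ⋃ k : ℕ, (fun x : Fin (a + b) → ℝ => (Tab a b)^[k] x) ⁻¹'
        {z : Fin (a + b) → ℝ | z ⟨a - 1, by omega⟩ = 0}) = 0 :=
    measure_union_null (hyper2_null hab hab2) (measure_iUnion_null hiter)
  rw [ae_iff]
  refine measure_mono_null (fun x hx => ?_) hBADnull
  by_contra hxB
  refine hx ?_
  have hA : ¬ (x ⟨a + 1, by omega⟩ - Sv hab x = 0) := fun h =>
    hxB (Set.mem_union_left _ h)
  have hB : ∀ k : ℕ, ((Tab a b)^[k] x) ⟨a - 1, by omega⟩ ≠ 0 := fun k h =>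
    hxB (Set.mem_union_right _ (Set.mem_iUnion.2 ⟨k, h⟩))
  clear hx hxB
  intro hprem
  obtain ⟨hxΛ, hxD0⟩ := hprem
  have hD : Sv hab x ≤ x ⟨a + 1, by omega⟩ := hxD0
  have hspec := iter_spec ha hab hab2 x hxΛ hD
  set s : ℕ → ℝ := fun k => Sv hab ((Tab a b)^[k] x) with hs
  set m : ℕ → ℝ := fun k => ((Tab a b)^[k] x) ⟨a - 1, by omega⟩ with hm
  have hm0 : ∀ k, 0 ≤ m k := fun k => (hspec k).1.1 _
  have hs0 : ∀ k, 0 ≤ s k := fun k => Sv_nonneg hab (hspec k).1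
  have hsucc : ∀ k, s (k + 1) = s k - m k := by
    intro k
    have h := (tab_spec ha hab hab2 ((Tab a b)^[k] x) (hspec k).1 (hspec k).2.1).2.1
    show Sv hab ((Tab a b)^[k + 1] x) = _
    rw [Function.iterate_succ_apply']
    exact h
  have hanti : Antitone s := antitone_nat_of_succ_le fun k => by
    rw [hsucc k]; have := hm0 k; linarith
  have hbdd : BddBelow (Set.range s) := ⟨0, by rintro _ ⟨k, rfl⟩; exact hs0 k⟩
  set L : ℝ := ⨅ k, s k with hL
  have hsL : Tendsto s atTop (𝓝 L) := tendsto_atTop_ciInf hanti hbdd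
  have hLle : ∀ k, L ≤ s k := fun k => ciInf_le hbdd k
  have hL0 : 0 ≤ L := le_ciInf hs0
  have hmtend : Tendsto m atTop (𝓝 0) := by
    have h1 : Tendsto (fun k => s k - s (k + 1)) atTop (𝓝 (L - L)) :=
      hsL.sub (hsL.comp (tendsto_add_atTop_nat 1))
    rw [sub_self] at h1
    exact h1.congr fun k => by rw [hsucc k]; ring
  have hLzero : L = 0 := by
    by_contra hLne
    have hLpos : 0 < L := lt_of_le_of_ne hL0 (Ne.symm hLne)
    have hev : ∀ᶠ k in atTop, m k < L / (a + 2) :=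
      hmtend.eventually_lt_const (by positivity)
    obtain ⟨K, hK⟩ := eventually_atTop.1 hev
    have claim : ∀ k, K ≤ k → m k = m K := by
      intro k hk
      refine Nat.le_induction rfl ?_ k hk
      intro k hk ih
      have hz := hspec k
      have hcond : 2 * ((Tab a b)^[k] x) ⟨a - 1, by omega⟩ ≤
          ((Tab a b)^[k] x) ⟨a, by omega⟩ := by
        have h1 : s k = (∑ i : Fin a, ((Tab a b)^[k] x) (Fin.castLE hab i.castSucc)) +
            ((Tab a b)^[k] x) ⟨a, by omega⟩ := Sv_split hab _
        have h3 : (∑ i : Fin a, ((Tab a b)^[k] x) (Fin.castLE hab i.castSucc)) ≤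
            (a : ℝ) * m k := by
          have h2 : ∀ i : Fin a, ((Tab a b)^[k] x) (Fin.castLE hab i.castSucc) ≤ m k :=
            fun i => lambda_mono hz.1 _ _ (show (i : ℕ) ≤ a - 1 by have := i.isLt; omega)
          calc (∑ i : Fin a, ((Tab a b)^[k] x) (Fin.castLE hab i.castSucc))
              ≤ ∑ _i : Fin a, m k := Finset.sum_le_sum fun i _ => h2 i
            _ = (a : ℝ) * m k := by
                rw [Finset.sum_const, Finset.card_univ, Fintype.card_fin, nsmul_eq_mul]
        have h4 : L ≤ s k := hLle k
        have h5 : m k < L / (a + 2) := hK k hk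
        have h6 : m k * ((a : ℝ) + 2) < L := by
          rw [lt_div_iff₀ (by positivity : (0 : ℝ) < (a : ℝ) + 2)] at h5
          exact h5
        have h7 : m k = ((Tab a b)^[k] x) ⟨a - 1, by omega⟩ := rfl
        rw [← h7]
        linarith
      have hfroz := tab_frozen ha hab ((Tab a b)^[k] x) hz.1 hcond
      have hstep : m (k + 1) = m k := by
        show ((Tab a b)^[k + 1] x) ⟨a - 1, by omega⟩ = _
        rw [Function.iterate_succ_apply', hfroz,
          subVec_small ((Tab a b)^[k] x) ⟨a - 1, by omega⟩ (show a - 1 < a by omega)]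
      rw [hstep, ih]
    have hconst : Tendsto (fun _ : ℕ => m K) atTop (𝓝 0) :=
      hmtend.congr' (eventually_atTop.2 ⟨K, fun k hk => claim k hk⟩)
    exact hB K (tendsto_nhds_unique tendsto_const_nhds hconst)
  have hstend : Tendsto s atTop (𝓝 0) := hLzero ▸ hsL
  constructor
  · intro i hi
    refine squeeze_zero (fun k => (hspec k).1.1 i) (fun k => ?_) hstend
    have h8 : ((Tab a b)^[k] x) i =
        ((Tab a b)^[k] x) (Fin.castLE hab ⟨(i : ℕ), hi⟩) := rfl
    rw [h8]
    exact coord_le_Sv hab (hspec k).1 _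
  · intro j hj
    have hpos : 0 < x j - Sv hab x := by
      have h1 : x ⟨a + 1, by omega⟩ ≤ x j := lambda_mono hxΛ _ _ (by simpa using hj)
      have h2 : Sv hab x ≠ x ⟨a + 1, by omega⟩ := fun h => hA (by rw [h]; ring)
      have h3 : Sv hab x < x ⟨a + 1, by omega⟩ := lt_of_le_of_ne hD h2
      linarith
    refine ⟨hpos, ?_⟩
    have heq : ∀ k, ((Tab a b)^[k] x) j = x j - Sv hab x + s k := fun k =>
      (hspec k).2.2 j hj
    have htt : Tendsto (fun k => x j - Sv hab x + s k) atTop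
        (𝓝 (x j - Sv hab x + 0)) := tendsto_const_nhds.add hstend
    rw [add_zero] at htt
    exact htt.congr fun k => (heq k).symm
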